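/- Let d > 0 and let x, y be points in the Euclidean plane with r := dist(x, y) satisfying 0 ≤ r ≤ 2d. Then the Lebesgue measure (area) of the intersection of the open (equivalently closed) balls of radius d centered at x and at y equals 2d²·arccos(r/(2d)) − (r/2)·√(4d² − r²). -/

import Mathlib

open MeasureTheory Metric Real Set



lemma hasDeriv_F (d : ℝ) (hd : 0 < d) {t : ℝ} (ht : t ∈ Set.Ioo (-d) d) :
    HasDerivAt (fun t => (t * Real.sqrt (d^2 - t^2) + d^2 * Real.arcsin (t/d)) / 2)
      (Real.sqrt (d^2 - t^2)) t := by
  obtain ⟨ht1, ht2⟩ := ht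
  have hpos : 0 < d^2 - t^2 := by nlinarith
  have hsqpos : 0 < Real.sqrt (d^2 - t^2) := Real.sqrt_pos.2 hpos
  have h1 : HasDerivAt (fun t : ℝ => d^2 - t^2) (-(2*t)) t := by
    simpa using ((hasDerivAt_pow 2 t).const_sub (d^2))
  have h2 : HasDerivAt (fun t : ℝ => Real.sqrt (d^2 - t^2))
      (-(2*t) / (2 * Real.sqrt (d^2 - t^2))) t := h1.sqrt hpos.ne'
  have h3 : HasDerivAt (fun t : ℝ => t * Real.sqrt (d^2 - t^2))
      (Real.sqrt (d^2 - t^2) + t * (-(2*t) / (2 * Real.sqrt (d^2 - t^2)))) t := by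
    simpa using (hasDerivAt_id' t).fun_mul h2
  have hne1 : t / d ≠ -1 := by
    intro h; rw [div_eq_iff hd.ne'] at h; simp at h; linarith
  have hne2 : t / d ≠ 1 := by
    intro h; rw [div_eq_iff hd.ne'] at h; simp at h; linarith
  have h4 : HasDerivAt (fun t : ℝ => Real.arcsin (t / d))
      ((1 / Real.sqrt (1 - (t/d)^2)) * (1/d)) t :=
    (Real.hasDerivAt_arcsin hne1 hne2).comp (h := fun x => x / d) t ((hasDerivAt_id' t).div_const d)
  have key : Real.sqrt (1 - (t/d)^2) = Real.sqrt (d^2 - t^2) / d := by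
    rw [show (1 : ℝ) - (t/d)^2 = (d^2 - t^2) / d^2 by field_simp,
      Real.sqrt_div hpos.le, Real.sqrt_sq hd.le]
  have h5 := (h3.add (h4.const_mul (d^2))).div_const 2
  refine h5.congr_deriv ?_
  symm
  rw [key]
  set s := Real.sqrt (d^2 - t^2) with hs
  have hsq : s^2 = d^2 - t^2 := Real.sq_sqrt hpos.le
  field_simp
  linear_combination hsq

lemma integral_sqrt_seg (d : ℝ) (hd : 0 < d) {a : ℝ} (ha : -d ≤ a) (had : a ≤ d) :
    ∫ t in a..d, Real.sqrt (d^2 - t^2)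
      = d^2 * (π/2) / 2 - (a * Real.sqrt (d^2 - a^2) + d^2 * Real.arcsin (a/d)) / 2 := by
  have hF : ∀ t ∈ Set.Ioo a d, HasDerivWithinAt
      (fun t => (t * Real.sqrt (d^2 - t^2) + d^2 * Real.arcsin (t/d)) / 2)
      (Real.sqrt (d^2 - t^2)) (Set.Ioi t) t := by
    intro t ht
    exact (hasDeriv_F d hd ⟨lt_of_le_of_lt ha ht.1, ht.2⟩).hasDerivWithinAt
  have hcont : ContinuousOn
      (fun t => (t * Real.sqrt (d^2 - t^2) + d^2 * Real.arcsin (t/d)) / 2)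
      (Set.Icc a d) := by
    apply Continuous.continuousOn
    have := Real.continuous_arcsin
    continuity
  have hint : IntervalIntegrable (fun t => Real.sqrt (d^2 - t^2)) volume a d := by
    apply Continuous.intervalIntegrable
    fun_prop
  rw [intervalIntegral.integral_eq_sub_of_hasDeriv_right_of_le had hcont hF hint]
  have h1 : Real.sqrt (d^2 - d^2) = 0 := by simp
  have h2 : Real.arcsin (d/d) = π/2 := by
    rw [div_self hd.ne', Real.arcsin_one]
  simp only [h1, h2]
  ring

lemma lens (d r : ℝ) (hd : 0 < d) (hr0 : 0 ≤ r) (hr : r ≤ 2*d) :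
    volume {p : ℝ × ℝ | p.1^2 + p.2^2 < d^2 ∧ (p.1 - r)^2 + p.2^2 < d^2} =
      ENNReal.ofReal (2*d^2 * Real.arccos (r/(2*d)) - r/2 * Real.sqrt (4*d^2 - r^2)) := by
  set g : ℝ → ℝ := fun t => Real.sqrt (d^2 - (max t (r - t))^2) with hg
  have hgc : Continuous g := by
    apply Continuous.sqrt
    continuity
  -- basic inequalities about m := max t (r - t)
  have hm1 : ∀ t : ℝ, t^2 ≤ (max t (r - t))^2 := by
    intro t; rcases le_total t (r - t) with h | h
    · rw [max_eq_right h]; nlinarith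
    · rw [max_eq_left h]
  have hm2 : ∀ t : ℝ, (t - r)^2 ≤ (max t (r - t))^2 := by
    intro t; rcases le_total t (r - t) with h | h
    · rw [max_eq_right h]; nlinarith
    · rw [max_eq_left h]; nlinarith
  -- the set is a region between two graphs
  have hset : {p : ℝ × ℝ | p.1^2 + p.2^2 < d^2 ∧ (p.1 - r)^2 + p.2^2 < d^2}
      = regionBetween (fun t => -g t) g (Ioo (r - d) d) := by
    ext ⟨a, b⟩
    simp only [mem_setOf_eq, regionBetween, mem_Ioo, mem_sep_iff]
    constructor
    · rintro ⟨h1, h2⟩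
      have ha1 : r - d < a := by nlinarith
      have ha2 : a < d := by nlinarith
      have hb2 : b^2 < d^2 - (max a (r - a))^2 := by
        rcases max_cases a (r - a) with ⟨he, _⟩ | ⟨he, _⟩ <;> rw [he]
        · nlinarith [hm2 a]
        · nlinarith [hm1 a]
      have habs : |b| < g a := by
        rw [hg, ← Real.sqrt_sq_eq_abs]
        exact Real.sqrt_lt_sqrt (sq_nonneg b) (by linarith)
      rw [abs_lt] at habs
      exact ⟨⟨ha1, ha2⟩, by linarith [habs.1], habs.2⟩
    · rintro ⟨⟨ha1, ha2⟩, hb1, hb2⟩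
      have hmd : (max a (r - a))^2 < d^2 := by
        rcases max_cases a (r - a) with ⟨he, _⟩ | ⟨he, _⟩ <;> rw [he] <;> nlinarith
      have habs : |b| < g a := abs_lt.2 ⟨by linarith, hb2⟩
      have hb2' : b^2 < d^2 - (max a (r - a))^2 := by
        have := Real.sq_sqrt (le_of_lt (by linarith : (0:ℝ) < d^2 - (max a (r - a))^2))
        calc b^2 = |b|^2 := (sq_abs b).symm
        _ < (g a)^2 := by
            apply pow_lt_pow_left₀ habs (abs_nonneg b)
            norm_num
        _ = d^2 - (max a (r - a))^2 := this
      exact ⟨by nlinarith [hm1 a], by nlinarith [hm2 a]⟩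
  -- integrability
  have hInt : IntegrableOn g (Ioo (r - d) d) volume :=
    (hgc.integrableOn_Icc).mono_set Ioo_subset_Icc_self
  have hIntNeg : IntegrableOn (fun t => -g t) (Ioo (r - d) d) volume := hInt.neg
  rw [hset, Measure.volume_eq_prod,
    volume_regionBetween_eq_integral hIntNeg hInt measurableSet_Ioo
      (fun t _ => neg_le_self (Real.sqrt_nonneg _))]
  congr 1
  have hrd : r - d ≤ d := by linarith
  have h2g : ∀ t, (g - fun t => -g t) t = 2 * g t := by
    intro t; simp [two_mul]
  calc ∫ t in Ioo (r - d) d, (g - fun t => -g t) t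
      = ∫ t in Ioo (r - d) d, 2 * g t := by simp [h2g]
    _ = ∫ t in (r - d)..d, 2 * g t := by
        rw [intervalIntegral.integral_of_le hrd, integral_Ioc_eq_integral_Ioo]
    _ = (∫ t in (r - d)..(r/2), 2 * g t) + ∫ t in (r/2)..d, 2 * g t := by
        rw [intervalIntegral.integral_add_adjacent_intervals] <;>
          exact ((hgc.const_smul (2:ℝ)).intervalIntegrable _ _)
    _ = (∫ t in (r - d)..(r/2), 2 * Real.sqrt (d^2 - (r - t)^2))
        + ∫ t in (r/2)..d, 2 * Real.sqrt (d^2 - t^2) := by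
        congr 1
        · apply intervalIntegral.integral_congr
          intro t ht
          rw [uIcc_of_le (by linarith)] at ht
          show 2 * Real.sqrt (d^2 - (max t (r - t))^2) = 2 * Real.sqrt (d^2 - (r - t)^2)
          rw [max_eq_right (by linarith [ht.2] : t ≤ r - t)]
        · apply intervalIntegral.integral_congr
          intro t ht
          rw [uIcc_of_le (by linarith)] at ht
          show 2 * Real.sqrt (d^2 - (max t (r - t))^2) = 2 * Real.sqrt (d^2 - t^2)
          rw [max_eq_left (by linarith [ht.1] : r - t ≤ t)]
    _ = 2 * ((∫ t in (r/2)..d, Real.sqrt (d^2 - t^2))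
        + ∫ t in (r/2)..d, Real.sqrt (d^2 - t^2)) := by
        rw [show (∫ t in (r - d)..(r/2), 2 * Real.sqrt (d^2 - (r - t)^2))
            = ∫ t in (r - (r/2))..(r - (r - d)), 2 * Real.sqrt (d^2 - t^2) from
          intervalIntegral.integral_comp_sub_left (fun t => 2 * Real.sqrt (d^2 - t^2)) r,
          show r - r/2 = r/2 by ring, show r - (r - d) = d by ring,
          intervalIntegral.integral_const_mul]
        ring
    _ = 2*d^2 * Real.arccos (r/(2*d)) - r/2 * Real.sqrt (4*d^2 - r^2) := by
        rw [integral_sqrt_seg d hd (by linarith) (by linarith)]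
        rw [Real.arccos_eq_pi_div_two_sub_arcsin,
          show r/2/d = r/(2*d) by ring,
          show (4:ℝ)*d^2 - r^2 = 2^2 * (d^2 - (r/2)^2) by ring,
          Real.sqrt_mul (by norm_num) , Real.sqrt_sq (by norm_num)]
        ring

/-- The area of the intersection of two discs of radius `d` in the Euclidean
plane whose centers are at distance `r ≤ 2d` equals
`2 d² arccos (r/(2d)) − (r/2) √(4d² − r²)`. -/
theorem area_inter_balls (d : ℝ) (hd : 0 < d) (x y : EuclideanSpace ℝ (Fin 2))
    (hr : dist x y ≤ 2 * d) :
    volume (ball x d ∩ ball y d) =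
      ENNReal.ofReal (2 * d ^ 2 * Real.arccos (dist x y / (2 * d))
        - (dist x y / 2) * Real.sqrt (4 * d ^ 2 - dist x y ^ 2)) := by
  set r := dist x y with hrdef
  set v : EuclideanSpace ℝ (Fin 2) := y - x with hv
  set w : EuclideanSpace ℝ (Fin 2) := r • EuclideanSpace.single 0 (1:ℝ) with hw
  have hnv : ‖v‖ = r := by rw [hv, hrdef, dist_comm, dist_eq_norm]
  have hnw : ‖w‖ = r := by
    rw [hw, norm_smul, EuclideanSpace.norm_single]
    simp [abs_of_nonneg (dist_nonneg : (0:ℝ) ≤ r)]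
    exact dist_nonneg
  set R : EuclideanSpace ℝ (Fin 2) ≃ₗᵢ[ℝ] EuclideanSpace ℝ (Fin 2) :=
    Submodule.reflection (ℝ ∙ (v - w))ᗮ with hR
  have hRv : R v = w := Submodule.reflection_sub (by rw [hnv, hnw])
  set φ : EuclideanSpace ℝ (Fin 2) → ℝ × ℝ :=
    fun p => (MeasurableEquiv.piFinTwo fun _ => ℝ)
      ((MeasurableEquiv.toLp 2 (Fin 2 → ℝ)).symm (R (p - x))) with hφ
  have hmp : MeasurePreserving φ volume volume := by
    exact ((volume_preserving_piFinTwo fun _ => ℝ).comp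
      ((EuclideanSpace.volume_preserving_symm_measurableEquiv_toLp (Fin 2)).comp
        (R.measurePreserving.comp (measurePreserving_sub_right volume x))))
  have hnorm2 : ∀ q : EuclideanSpace ℝ (Fin 2), ‖q‖ < d ↔ (q 0)^2 + (q 1)^2 < d^2 := by
    intro q
    rw [EuclideanSpace.norm_eq, Fin.sum_univ_two, Real.sqrt_lt' hd]
    simp [sq_abs]
  have hw0 : w 0 = r := by simp [hw, EuclideanSpace.single_apply]
  have hw1 : w 1 = 0 := by simp [hw, EuclideanSpace.single_apply]
  have hpre : ball x d ∩ ball y d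
      = φ ⁻¹' {p : ℝ × ℝ | p.1^2 + p.2^2 < d^2 ∧ (p.1 - r)^2 + p.2^2 < d^2} := by
    ext p
    have hφp : φ p = (R (p - x) 0, R (p - x) 1) := rfl
    simp only [mem_inter_iff, mem_ball, mem_preimage, hφp, mem_setOf_eq]
    have hdy : dist p y = ‖R (p - x) - w‖ := by
      rw [← hRv, ← map_sub, R.norm_map, dist_eq_norm]
      congr 1
      rw [hv]; abel
    have hdx : dist p x = ‖R (p - x)‖ := by rw [R.norm_map, dist_eq_norm]
    have hsub0 : (R (p - x) - w) 0 = R (p - x) 0 - r := by simp [hw0]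
    have hsub1 : (R (p - x) - w) 1 = R (p - x) 1 := by simp [hw1]
    rw [hdy, hdx, hnorm2, hnorm2, hsub0, hsub1]
  rw [hpre, hmp.measure_preimage]
  · exact lens d r hd dist_nonneg hr
  · have h1 : IsOpen {p : ℝ × ℝ | p.1^2 + p.2^2 < d^2} := by
      apply isOpen_lt <;> fun_prop
    have h2 : IsOpen {p : ℝ × ℝ | (p.1 - r)^2 + p.2^2 < d^2} := by
      apply isOpen_lt <;> fun_prop
    exact (h1.inter h2).measurableSet.nullMeasurableSet
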